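/- Let S := AdjoinRoot (X^2 + X + 1 : Polynomial (ZMod 4)), let M := !![0, 1; 3, 3] and U := !![1, 1; 1, 1] in Matrix (Fin 2) (Fin 2) (ZMod 4), and let ι : S →ₐ[ZMod 4] Matrix (Fin 2) (Fin 2) (ZMod 4) be the algebra homomorphism sending the adjoined root to M. Fix n : ℕ with 0 < n, and let τ denote the cyclic shift on vectors of length n (τ(c)ᵢ = c_{i-1}, indices mod n). Let C₁ and C₂ be S-submodules of (Fin n → S), and define C := { y : Fin n → Matrix (Fin 2) (Fin 2) (ZMod 4) | ∃ c₁ ∈ C₁, ∃ c₂ ∈ C₂, y = fun i => ι (c₁ i) + U * ι (c₂ i) }. Then C is closed under the cyclic shift τ if and only if both C₁ and C₂ are closed under the cyclic shift τ. (A linear code C = C₁ + U·C₂ over M₂(ℤ₄) is cyclic if and only if C₁ and C₂ are cyclic codes over ℤ₄[w].) -/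

import Mathlib

open Polynomial Matrix

private lemma monicP5 : (X ^ 2 + X + 1 : Polynomial (ZMod 4)).Monic := by monicity!

private lemma rep5 (s : AdjoinRoot (X ^ 2 + X + 1 : Polynomial (ZMod 4))) :
    ∃ a b : ZMod 4, s = algebraMap _ _ a + algebraMap _ _ b *
      AdjoinRoot.root (X ^ 2 + X + 1 : Polynomial (ZMod 4)) := by
  haveI : Nontrivial (ZMod 4) := ⟨0, 1, by decide⟩
  obtain ⟨p, rfl⟩ := AdjoinRoot.mk_surjective s
  set P : Polynomial (ZMod 4) := X ^ 2 + X + 1 with hP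
  have h1 : AdjoinRoot.mk P p = AdjoinRoot.mk P (p %ₘ P) := by
    conv_lhs => rw [← Polynomial.modByMonic_add_div p P]
    rw [map_add, _root_.map_mul, AdjoinRoot.mk_self, zero_mul, add_zero]
  have hdeg : (p %ₘ P).degree ≤ 1 := by
    have h2 : (p %ₘ P).degree < P.degree := Polynomial.degree_modByMonic_lt p monicP5
    have hd : P.degree = 2 := by rw [hP]; compute_degree!
    rw [hd] at h2
    exact Order.le_of_lt_succ (by exact_mod_cast h2)
  have h3 := Polynomial.eq_X_add_C_of_degree_le_one hdeg
  refine ⟨(p %ₘ P).coeff 0, (p %ₘ P).coeff 1, ?_⟩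
  rw [h1]
  conv_lhs => rw [h3]
  rw [map_add, _root_.map_mul, AdjoinRoot.mk_C, AdjoinRoot.mk_C, AdjoinRoot.mk_X,
    AdjoinRoot.algebraMap_eq, add_comm]

private lemma zkey5 : ∀ a b p q : ZMod 4,
    a = p + q * 3 → b = q + (p + q * 3) → b * 3 = p + q * 3 → a + b * 3 = q + (p + q * 3) →
    a = 0 ∧ b = 0 ∧ p = 0 ∧ q = 0 := by decide

private lemma key5 (M U : Matrix (Fin 2) (Fin 2) (ZMod 4))
    (hM : M = !![0, 1; 3, 3]) (hU : U = !![1, 1; 1, 1])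
    (ι : AdjoinRoot (X ^ 2 + X + 1 : Polynomial (ZMod 4)) →ₐ[ZMod 4]
      Matrix (Fin 2) (Fin 2) (ZMod 4))
    (hι : ι (AdjoinRoot.root (X ^ 2 + X + 1 : Polynomial (ZMod 4))) = M)
    (s t : AdjoinRoot (X ^ 2 + X + 1 : Polynomial (ZMod 4)))
    (h : ι s = U * ι t) : s = 0 ∧ t = 0 := by
  obtain ⟨a, b, rfl⟩ := rep5 s
  obtain ⟨p, q, rfl⟩ := rep5 t
  have hmap : ∀ x y : ZMod 4, ι (algebraMap _ _ x + algebraMap _ _ y *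
      AdjoinRoot.root (X ^ 2 + X + 1 : Polynomial (ZMod 4))) =
      x • (1 : Matrix (Fin 2) (Fin 2) (ZMod 4)) + y • M := by
    intro x y
    rw [map_add, _root_.map_mul, AlgHom.commutes, AlgHom.commutes, hι,
      Algebra.algebraMap_eq_smul_one, ← Algebra.smul_def]
  rw [hmap, hmap] at h
  subst hM hU
  have e := fun i j => Matrix.ext_iff.2 h i j
  have e00 := e 0 0
  have e01 := e 0 1
  have e10 := e 1 0
  have e11 := e 1 1
  simp [Matrix.mul_apply, Fin.sum_univ_two, Matrix.one_apply, Matrix.smul_apply]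
    at e00 e01 e10 e11
  obtain ⟨ha, hb, hp, hq⟩ := zkey5 a b p q e00 e01 e10 e11
  subst ha hb hp hq
  simp


set_option maxHeartbeats 1000000 in
/-- A linear code `C = C₁ + U·C₂` of length `n` over `M₂(ℤ₄)` is cyclic (closed
under the cyclic shift) iff `C₁` and `C₂` are cyclic codes over `ℤ₄[w]`. -/
theorem stmt5 (M U : Matrix (Fin 2) (Fin 2) (ZMod 4))
    (hM : M = !![0, 1; 3, 3]) (hU : U = !![1, 1; 1, 1])
    (ι : AdjoinRoot (X ^ 2 + X + 1 : Polynomial (ZMod 4)) →ₐ[ZMod 4]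
      Matrix (Fin 2) (Fin 2) (ZMod 4))
    (hι : ι (AdjoinRoot.root (X ^ 2 + X + 1 : Polynomial (ZMod 4))) = M)
    (n : ℕ) [NeZero n]
    (C₁ C₂ : Submodule (AdjoinRoot (X ^ 2 + X + 1 : Polynomial (ZMod 4)))
      (Fin n → AdjoinRoot (X ^ 2 + X + 1 : Polynomial (ZMod 4))))
    (C : Set (Fin n → Matrix (Fin 2) (Fin 2) (ZMod 4)))
    (hC : C = { y | ∃ c₁ ∈ C₁, ∃ c₂ ∈ C₂, y = fun i => ι (c₁ i) + U * ι (c₂ i) }) :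
    ((∀ y ∈ C, (fun i => y (i - 1)) ∈ C) ↔
      (∀ c ∈ C₁, (fun i => c (i - 1)) ∈ C₁) ∧
      (∀ c ∈ C₂, (fun i => c (i - 1)) ∈ C₂)) := by
  subst hC
  constructor
  · intro h
    constructor
    · intro c hc
      have hy : (fun i => ι (c i)) ∈
          { y | ∃ c₁ ∈ C₁, ∃ c₂ ∈ C₂, y = fun i => ι (c₁ i) + U * ι (c₂ i) } :=
        ⟨c, hc, 0, C₂.zero_mem, by funext i; simp⟩
      obtain ⟨c₁, hc₁, c₂, hc₂, heq⟩ := h _ hy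
      have hkey : ∀ i : Fin n, c (i - 1) - c₁ i = 0 ∧ c₂ i = 0 := by
        intro i
        have hi := congrFun heq i
        exact key5 M U hM hU ι hι _ _ (by rw [map_sub, hi, add_sub_cancel_left])
      have : (fun i => c (i - 1)) = c₁ := by
        funext i
        exact sub_eq_zero.mp (hkey i).1
      rw [this]; exact hc₁
    · intro c hc
      have hy : (fun i => U * ι (c i)) ∈
          { y | ∃ c₁ ∈ C₁, ∃ c₂ ∈ C₂, y = fun i => ι (c₁ i) + U * ι (c₂ i) } :=
        ⟨0, C₁.zero_mem, c, hc, by funext i; simp⟩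
      obtain ⟨c₁, hc₁, c₂, hc₂, heq⟩ := h _ hy
      have hkey : ∀ i : Fin n, c₁ i = 0 ∧ c (i - 1) - c₂ i = 0 := by
        intro i
        have hi := congrFun heq i
        exact key5 M U hM hU ι hι _ _ (by rw [map_sub, mul_sub, hi, add_sub_cancel_right])
      have : (fun i => c (i - 1)) = c₂ := by
        funext i
        have h1 := (hkey i).2
        exact sub_eq_zero.mp h1
      rw [this]; exact hc₂
  · rintro ⟨h1, h2⟩ y ⟨c₁, hc₁, c₂, hc₂, rfl⟩
    exact ⟨fun i => c₁ (i - 1), h1 c₁ hc₁, fun i => c₂ (i - 1), h2 c₂ hc₂, rfl⟩
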